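/- arXiv:1409.5504 — 2 statements merged into one kernel-verified Lean document; each statement's English description precedes it below -/
import Mathlib

section
/- Let h be a negatively curved singular Hermitian metric on the trivial rank-r bundle over an open set Ω ⊆ ℂⁿ, and let U ⋐ Ω be a relatively compact open subset. Then there exists a constant C > 0 such that |h_{ij}(x)| ≤ C for all x ∈ U and all 1 ≤ i, j ≤ r. Consequently, denoting by 0 ≤ λ₁(x) ≤ … ≤ λ_r(x) the eigenvalues of h(x): λ_r(x) ≤ rC for all x ∈ U, λ₁(x) ≥ (rC)^{1-r} det h(x) for all x ∈ U, and h(x) − ((rC)^{1-r} det h(x))·I_r is positive semidefinite for every x ∈ U. -/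
open MeasureTheory Filter Set Topology
open scoped ComplexOrder

noncomputable section

/-- The circle average of an `EReal`-valued function, defined as the supremum of the averages
of integrable real-valued minorants (the lower integral). -/
def lowerCircleAvg {E : Type*} [AddCommGroup E] [Module ℂ E]
    (φ : E → EReal) (a b : E) (ρ : ℝ) : EReal :=
  ⨆ g ∈ {g : ℝ → ℝ |
      IntervalIntegrable g volume 0 (2 * Real.pi) ∧
      ∀ θ ∈ Set.Icc (0 : ℝ) (2 * Real.pi),
        (g θ : EReal) ≤ φ (a + ((ρ : ℂ) * Complex.exp ((θ : ℂ) * Complex.I)) • b)},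
    (((2 * Real.pi)⁻¹ * ∫ θ in (0:ℝ)..(2 * Real.pi), g θ : ℝ) : EReal)

/-- `φ : E → [-∞, ∞)` is plurisubharmonic on `Ω`: upper semicontinuous, never `+∞`,
not identically `-∞` on any connected component of `Ω`, and satisfying the sub-mean value
inequality on every complex disc contained in `Ω`. -/
def PSHOn {E : Type*} [NormedAddCommGroup E] [NormedSpace ℂ E]
    (φ : E → EReal) (Ω : Set E) : Prop :=
  UpperSemicontinuousOn φ Ω ∧
  (∀ x ∈ Ω, φ x ≠ ⊤) ∧
  (∀ x ∈ Ω, ∃ y ∈ connectedComponentIn Ω x, φ y ≠ ⊥) ∧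
  (∀ a ∈ Ω, ∀ b : E, ∀ ρ : ℝ, 0 < ρ →
    (∀ l : ℂ, ‖l‖ ≤ ρ → a + l • b ∈ Ω) →
    φ a ≤ lowerCircleAvg φ a b ρ)

/-- Extended-real logarithm of a nonnegative real number: `log 0 = -∞`. -/
def elog (x : ℝ) : EReal := if x ≤ 0 then (⊥ : EReal) else ((Real.log x : ℝ) : EReal)

/-- `|v|²_h(x) = ∑ᵢⱼ h_{ij}(x) vⁱ(x) ⬝ conj (v^j(x))`. -/
def hermNormSq {E : Type*} {ι : Type*} [Fintype ι]
    (h : E → Matrix ι ι ℂ) (v : E → ι → ℂ) (x : E) : ℝ :=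
  (∑ i, ∑ j, h x i j * v x i * (starRingEnd ℂ) (v x j)).re

/-- A singular Hermitian metric on the trivial bundle of rank `#ι` over `Ω`: a measurable map
defined on `Ω` with values in the positive semidefinite Hermitian matrices with
`0 < det h < +∞` almost everywhere on `Ω`. -/
def IsSingMetricOn {E : Type*} [MeasureSpace E] {ι : Type*} [Fintype ι] [DecidableEq ι]
    (h : E → Matrix ι ι ℂ) (Ω : Set E) : Prop :=
  (∀ i j, Measurable fun x : Ω => h x.1 i j) ∧
  (∀ x ∈ Ω, (h x).PosSemidef) ∧
  (∀ᵐ x ∂(volume.restrict Ω), 0 < (h x).det.re)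

/-- `h` is negatively curved (Griffiths semi-negative) on `Ω`: for every open `U ⊆ Ω` and
every holomorphic section `v` on `U` not identically zero on any connected component of `U`,
`log |v|²_h` is plurisubharmonic on `U`. -/
def NegCurved {E : Type*} [NormedAddCommGroup E] [NormedSpace ℂ E] {ι : Type*} [Fintype ι]
    (h : E → Matrix ι ι ℂ) (Ω : Set E) : Prop :=
  ∀ U : Set E, IsOpen U → U ⊆ Ω →
    ∀ v : E → ι → ℂ, DifferentiableOn ℂ v U →
      (∀ x ∈ U, ∃ y ∈ connectedComponentIn U x, v y ≠ 0) →
      PSHOn (fun x => elog (hermNormSq h v x)) U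

lemma usc_bddAbove' {E : Type*} [TopologicalSpace E] {φ : E → EReal} {Ω K : Set E}
    (hΩ : IsOpen Ω) (hφ : UpperSemicontinuousOn φ Ω) (htop : ∀ x ∈ Ω, φ x ≠ ⊤)
    (hK : IsCompact K) (hKΩ : K ⊆ Ω) : ∃ M : ℝ, ∀ x ∈ K, φ x ≤ (M : EReal) := by
  have key : ∀ x ∈ K, ∃ M : ℝ, {z | φ z < (M : EReal)} ∈ 𝓝 x := by
    intro x hx
    obtain ⟨M, hM, -⟩ := EReal.lt_iff_exists_real_btwn.mp
      (lt_top_iff_ne_top.mpr (htop x (hKΩ hx)))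
    refine ⟨M, ?_⟩
    have h1 := hφ x (hKΩ hx) (M : EReal) hM
    rwa [nhdsWithin_eq_nhds.mpr (hΩ.mem_nhds (hKΩ hx))] at h1
  choose! M hM using key
  obtain ⟨t, htK, hcover⟩ := hK.elim_nhds_subcover (fun x => {z | φ z < (M x : EReal)}) hM
  by_cases ht : t.Nonempty
  · refine ⟨t.sup' ht M, fun x hx => ?_⟩
    obtain ⟨z, hz, hxz⟩ := Set.mem_iUnion₂.mp (hcover hx)
    exact le_trans hxz.le (by exact_mod_cast EReal.coe_le_coe_iff.mpr (Finset.le_sup' M hz))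
  · refine ⟨0, fun x hx => absurd (hcover hx) ?_⟩
    simp [Finset.not_nonempty_iff_eq_empty.mp ht]

lemma posSemidef_entry_le' {r : ℕ} {A : Matrix (Fin r) (Fin r) ℂ} (hA : A.PosSemidef) {C : ℝ}
    (hC : 0 ≤ C) (hd : ∀ i, (A i i).re ≤ C) (i j : Fin r) : ‖A i j‖ ≤ C := by
  open scoped MatrixOrder Matrix.Norms.L2Operator in
  obtain ⟨B, hB⟩ := CStarAlgebra.nonneg_iff_eq_star_mul_self.mp hA.nonneg
  rw [Matrix.star_eq_conjTranspose] at hB; subst hB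
  set f : EuclideanSpace ℂ (Fin r) := WithLp.toLp 2 (fun k => B k i) with hf
  set g : EuclideanSpace ℂ (Fin r) := WithLp.toLp 2 (fun k => B k j) with hg
  have hfg : (inner ℂ f g : ℂ) = (B.conjTranspose * B) i j := by
    simp [PiLp.inner_apply, Matrix.mul_apply, Matrix.conjTranspose_apply, RCLike.inner_apply,
      hf, hg, mul_comm]
  have hnorm : ∀ (k : Fin r) (u : EuclideanSpace ℂ (Fin r)),
      (inner ℂ u u : ℂ) = (B.conjTranspose * B) k k → ‖u‖ ≤ Real.sqrt C := by
    intro k u hu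
    rw [Real.le_sqrt (norm_nonneg u) hC]
    have h2 : ‖u‖ ^ 2 = ((B.conjTranspose * B) k k).re := by
      rw [InnerProductSpace.norm_sq_eq_re_inner (𝕜 := ℂ), hu, RCLike.re_to_complex]
    rw [h2]; exact hd k
  have h1 : ‖(inner ℂ f g : ℂ)‖ ≤ ‖f‖ * ‖g‖ := norm_inner_le_norm f g
  rw [hfg] at h1
  calc ‖(B.conjTranspose * B) i j‖ = ‖(B.conjTranspose * B) i j‖ := rfl
    _ ≤ ‖f‖ * ‖g‖ := h1
    _ ≤ Real.sqrt C * Real.sqrt C := by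
        refine mul_le_mul ?_ ?_ (norm_nonneg g) (Real.sqrt_nonneg C)
        · exact hnorm i f (by simp [PiLp.inner_apply, Matrix.mul_apply,
            Matrix.conjTranspose_apply, RCLike.inner_apply, hf, -inner_self_eq_norm_sq_to_K, mul_comm])
        · exact hnorm j g (by simp [PiLp.inner_apply, Matrix.mul_apply,
            Matrix.conjTranspose_apply, RCLike.inner_apply, hg, -inner_self_eq_norm_sq_to_K, mul_comm])
    _ = C := Real.mul_self_sqrt hC

lemma trace_eq_sum_eigenvalues' {r : ℕ} {A : Matrix (Fin r) (Fin r) ℂ} (hA : A.IsHermitian) :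
    A.trace = ∑ i, (hA.eigenvalues i : ℂ) := by
  conv_lhs => rw [hA.spectral_theorem]
  rw [Unitary.conjStarAlgAut_apply, Matrix.trace_mul_cycle,
    Matrix.mem_unitaryGroup_iff'.mp (Matrix.IsHermitian.eigenvectorUnitary hA).2, Matrix.one_mul,
    Matrix.trace_diagonal]
  simp


/-- Lemma 2.2.7(1): a negatively curved singular Hermitian metric has locally uniformly bounded
entries; on a relatively compact open subset `U ⋐ Ω`, the largest eigenvalue is at most `rC`,
the smallest eigenvalue is at least `(rC)^{1-r} det h`, and `h - (rC)^{1-r} (det h) • 1` is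
positive semidefinite. -/
theorem entry_and_eigenvalue_bounds_of_negCurved {n r : ℕ}
    (Ω : Set (Fin n → ℂ)) (hΩ : IsOpen Ω)
    (h : (Fin n → ℂ) → Matrix (Fin r) (Fin r) ℂ)
    (hmet : IsSingMetricOn h Ω) (hneg : NegCurved h Ω)
    (U : Set (Fin n → ℂ)) (hUopen : IsOpen U)
    (hUc : IsCompact (closure U)) (hUΩ : closure U ⊆ Ω) :
    ∃ C : ℝ, 0 < C ∧
      (∀ x ∈ U, ∀ i j, ‖h x i j‖ ≤ C) ∧
      (∀ x, ∀ hx : x ∈ U,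
        (∀ i, (hmet.2.1 x (hUΩ (subset_closure hx))).1.eigenvalues i ≤ (r : ℝ) * C) ∧
        (∀ i, (h x).det.re / ((r : ℝ) * C) ^ (r - 1) ≤
          (hmet.2.1 x (hUΩ (subset_closure hx))).1.eigenvalues i) ∧
        (h x - ((h x).det / ((r : ℂ) * (C : ℂ)) ^ (r - 1)) •
          (1 : Matrix (Fin r) (Fin r) ℂ)).PosSemidef) := by
  rcases eq_or_ne r 0 with hr | hr
  · subst hr
    refine ⟨1, one_pos, fun x _ i => i.elim0, fun x hx =>
      ⟨fun i => i.elim0, fun i => i.elim0, ⟨Subsingleton.elim _ _, fun v => ?_⟩⟩⟩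
    rw [Subsingleton.elim v 0]; simp
  · haveI : NeZero r := ⟨hr⟩
    have hrpos : 0 < r := Nat.pos_of_ne_zero hr
    -- step A: PSH of log of diagonal entries
    have hdiagPSH : ∀ i : Fin r,
        PSHOn (fun x => elog (hermNormSq h (fun _ => Pi.single i 1) x)) Ω := by
      intro i
      refine hneg Ω hΩ subset_rfl _ (differentiableOn_const _) ?_
      intro x hx
      exact ⟨x, mem_connectedComponentIn hx,
        fun hcon => by simpa using congrFun hcon i⟩
    have hherm : ∀ (i : Fin r) (x : Fin n → ℂ),
        hermNormSq h (fun _ => Pi.single i 1) x = (h x i i).re := by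
      intro i x
      unfold hermNormSq
      rw [Finset.sum_eq_single i, Finset.sum_eq_single i]
      · simp
      · intro b _ hb; simp [Pi.single_eq_of_ne hb]
      · intro hmem; exact absurd (Finset.mem_univ i) hmem
      · intro b _ hb
        rw [Finset.sum_eq_single i]
        · simp [Pi.single_eq_of_ne hb]
        · intro c _ hc; simp [Pi.single_eq_of_ne hc]
        · intro hmem; exact absurd (Finset.mem_univ i) hmem
      · intro hmem; exact absurd (Finset.mem_univ i) hmem
    have helog_ne_top : ∀ t : ℝ, elog t ≠ ⊤ := by
      intro t; unfold elog; split <;> simp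
    have hbdd : ∀ i : Fin r, ∃ M : ℝ, ∀ x ∈ closure U,
        elog ((h x i i).re) ≤ (M : EReal) := by
      intro i
      obtain ⟨M, hM⟩ := usc_bddAbove' hΩ (hdiagPSH i).1 (fun x _ => helog_ne_top _) hUc hUΩ
      exact ⟨M, fun x hx => by have := hM x hx; rwa [hherm] at this⟩
    choose Mv hMv using hbdd
    have huniv : (Finset.univ : Finset (Fin r)).Nonempty := Finset.univ_nonempty
    set M₀ : ℝ := Finset.univ.sup' huniv Mv with hM₀
    set C : ℝ := Real.exp M₀ with hCdef
    have hCpos : 0 < C := Real.exp_pos M₀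
    have hdiag : ∀ x ∈ closure U, ∀ i, (h x i i).re ≤ C := by
      intro x hx i
      have h1 : elog ((h x i i).re) ≤ (Mv i : EReal) := hMv i x hx
      by_cases h0 : (h x i i).re ≤ 0
      · exact h0.trans hCpos.le
      · push_neg at h0
        rw [elog, if_neg (not_le.mpr h0)] at h1
        have h2 : Real.log ((h x i i).re) ≤ Mv i := EReal.coe_le_coe_iff.mp h1
        calc (h x i i).re = Real.exp (Real.log ((h x i i).re)) := (Real.exp_log h0).symm
          _ ≤ Real.exp (Mv i) := Real.exp_le_exp.mpr h2
          _ ≤ C := Real.exp_le_exp.mpr (Finset.le_sup' Mv (Finset.mem_univ i))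
    have hentry : ∀ x ∈ closure U, ∀ i j, ‖h x i j‖ ≤ C := by
      intro x hx i j
      exact posSemidef_entry_le' (hmet.2.1 x (hUΩ hx)) hCpos.le (hdiag x hx) i j
    refine ⟨C, hCpos, fun x hx => hentry x (subset_closure hx), ?_⟩
    intro x hx
    have hxK : x ∈ closure U := subset_closure hx
    have hxΩ : x ∈ Ω := hUΩ hxK
    set hP : (h x).PosSemidef := hmet.2.1 x hxΩ with hPdef
    set hH : (h x).IsHermitian := hP.1 with hHdef
    set lam : Fin r → ℝ := hH.eigenvalues with hlam
    have hlam_nonneg : ∀ k, 0 ≤ lam k := hP.eigenvalues_nonneg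
    have htr : (h x).trace = ∑ k, (lam k : ℂ) := trace_eq_sum_eigenvalues' hH
    have hsum : ∑ k, lam k = ((h x).trace).re := by
      rw [htr, Complex.re_sum]; simp
    have htr_le : ((h x).trace).re ≤ (r : ℝ) * C := by
      have : ((h x).trace).re = ∑ k, (h x k k).re := by
        rw [Matrix.trace, Complex.re_sum]; rfl
      rw [this]
      calc ∑ k, (h x k k).re ≤ ∑ _k : Fin r, C :=
            Finset.sum_le_sum fun k _ => hdiag x hxK k
        _ = (r : ℝ) * C := by simp [mul_comm]
    have hmax : ∀ i, lam i ≤ (r : ℝ) * C := by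
      intro i
      calc lam i ≤ ∑ k, lam k :=
            Finset.single_le_sum (fun k _ => hlam_nonneg k) (Finset.mem_univ i)
        _ = ((h x).trace).re := hsum
        _ ≤ (r : ℝ) * C := htr_le
    have hdetC : (h x).det = ((∏ k, lam k : ℝ) : ℂ) := by
      rw [hH.det_eq_prod_eigenvalues]; push_cast; rfl
    have hdet_re : (h x).det.re = ∏ k, lam k := by rw [hdetC]; exact Complex.ofReal_re _
    have hpow : (0 : ℝ) < ((r : ℝ) * C) ^ (r - 1) := by positivity
    have hmin : ∀ i, (h x).det.re / ((r : ℝ) * C) ^ (r - 1) ≤ lam i := by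
      intro i
      rw [div_le_iff₀ hpow, hdet_re, ← Finset.mul_prod_erase Finset.univ lam (Finset.mem_univ i)]
      refine mul_le_mul_of_nonneg_left ?_ (hlam_nonneg i)
      calc ∏ k ∈ Finset.univ.erase i, lam k
          ≤ ∏ _k ∈ Finset.univ.erase i, ((r : ℝ) * C) :=
            Finset.prod_le_prod (fun k _ => hlam_nonneg k) (fun k _ => hmax k)
        _ = ((r : ℝ) * C) ^ (r - 1) := by
            rw [Finset.prod_const, Finset.card_erase_of_mem (Finset.mem_univ i),
              Finset.card_univ, Fintype.card_fin]
    refine ⟨hmax, hmin, ?_⟩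
    -- the PSD statement
    set c' : ℝ := (h x).det.re / ((r : ℝ) * C) ^ (r - 1) with hc'
    have hcc : ((h x).det / ((r : ℂ) * (C : ℂ)) ^ (r - 1)) = (c' : ℂ) := by
      rw [hc', hdet_re, hdetC]
      push_cast
      ring
    rw [hcc]
    set Umat : Matrix (Fin r) (Fin r) ℂ := (Matrix.IsHermitian.eigenvectorUnitary hH : Matrix (Fin r) (Fin r) ℂ) with hU
    have hUU : Umat * star Umat = 1 :=
      Matrix.mem_unitaryGroup_iff.mp (Matrix.IsHermitian.eigenvectorUnitary hH).2
    have key : h x - (c' : ℂ) • (1 : Matrix (Fin r) (Fin r) ℂ) =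
        Umat * Matrix.diagonal (fun k => ((lam k - c' : ℝ) : ℂ)) * star Umat := by
      have hd : Matrix.diagonal (fun k => ((lam k - c' : ℝ) : ℂ)) =
          Matrix.diagonal (RCLike.ofReal ∘ lam) - (c' : ℂ) • (1 : Matrix (Fin r) (Fin r) ℂ) := by
        ext k l
        by_cases hkl : k = l
        · subst hkl; simp [Matrix.diagonal, Matrix.one_apply]
        · simp [Matrix.diagonal, Matrix.one_apply, hkl]
      have hsp : h x = Umat * Matrix.diagonal (RCLike.ofReal ∘ lam) * star Umat := hH.spectral_theorem
      rw [hd, Matrix.mul_sub, Matrix.sub_mul, ← hsp]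
      congr 1
      rw [Matrix.mul_smul, Matrix.smul_mul, Matrix.mul_one, hUU]
    rw [key]
    have hdiagPSD : (Matrix.diagonal (fun k => ((lam k - c' : ℝ) : ℂ))).PosSemidef := by
      refine Matrix.posSemidef_diagonal_iff.mpr fun k => ?_
      rw [Complex.zero_le_real]
      exact sub_nonneg.mpr (hmin k)
    have := hdiagPSD.mul_mul_conjTranspose_same Umat
    rwa [Matrix.star_eq_conjTranspose]
end
end

section
/- Let h be a negatively curved singular Hermitian metric on the trivial rank-r bundle over an open set Ω ⊆ ℂⁿ, let 1 ≤ s ≤ r, and let B : Ω → M_{r×s}(ℂ) be a holomorphic matrix-valued map such that B(x) has rank s (is injective) for every x ∈ Ω (a holomorphic frame of a rank-s subbundle S of the trivial bundle). Then the restricted metric h_S, defined so that |v|²_{h_S}(x) = |B(x)v(x)|²_h(x) for holomorphic v : U → ℂ^s, is a singular Hermitian metric on the trivial rank-s bundle over Ω (in particular 0 < det h_S < +∞ almost everywhere) and is negatively curved. -/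
open MeasureTheory Filter Set Topology
open scoped ComplexOrder

noncomputable section

open scoped Matrix
section AuxRestriction



variable {r s : ℕ}

lemma aux_dot {ι : Type*} [Fintype ι] (A : Matrix ι ι ℂ) (v : ι → ℂ) :
    ∑ i, ∑ j, A i j * v i * (starRingEnd ℂ) (v j) = v ⬝ᵥ A *ᵥ star v := by
  simp only [dotProduct, Matrix.mulVec, Finset.mul_sum, Pi.star_apply]
  exact Finset.sum_congr rfl fun i _ => Finset.sum_congr rfl fun j _ => by
    simp [Complex.star_def]; ring

lemma aux_map_star_mulVec (B : Matrix (Fin r) (Fin s) ℂ) (w : Fin s → ℂ) :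
    B.map (starRingEnd ℂ) *ᵥ star w = star (B *ᵥ w) := by
  have hC : B.map (starRingEnd ℂ) = Bᴴᵀ := by
    ext i j; simp [Matrix.conjTranspose_apply]
  rw [hC, Matrix.mulVec_transpose, Matrix.star_mulVec]

lemma aux_key (M : Matrix (Fin r) (Fin r) ℂ) (B : Matrix (Fin r) (Fin s) ℂ) (w : Fin s → ℂ) :
    ∑ i, ∑ j, (Bᵀ * M * B.map (starRingEnd ℂ)) i j * w i * (starRingEnd ℂ) (w j)
    = ∑ i, ∑ j, M i j * (B *ᵥ w) i * (starRingEnd ℂ) ((B *ᵥ w) j) := by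
  rw [aux_dot, aux_dot, ← Matrix.mulVec_mulVec, ← Matrix.mulVec_mulVec,
    aux_map_star_mulVec, Matrix.dotProduct_mulVec w Bᵀ, Matrix.vecMul_transpose]

lemma aux_transpose_eq_conjTranspose_map (B : Matrix (Fin r) (Fin s) ℂ) :
    Bᵀ = (B.map (starRingEnd ℂ))ᴴ := by
  ext i j; simp [Matrix.conjTranspose_apply]

lemma aux_posDef_of_posSemidef_det {ι : Type*} [Fintype ι] [DecidableEq ι]
    {M : Matrix ι ι ℂ} (hM : M.PosSemidef) (hd : 0 < M.det.re) : M.PosDef := by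
  have hdet : M.det ≠ 0 := fun h => by simp [h] at hd
  have hinj : Function.Injective M.mulVec :=
    Matrix.mulVec_injective_iff_isUnit.mpr ((Matrix.isUnit_iff_isUnit_det M).mpr hdet.isUnit)
  refine Matrix.PosDef.of_dotProduct_mulVec_pos hM.1 fun x hx => ?_
  have h0 : M *ᵥ x ≠ 0 := fun h => hx (hinj (by simpa using h))
  have hne : star x ⬝ᵥ M *ᵥ x ≠ 0 := fun h => h0 ((hM.dotProduct_mulVec_zero_iff x).mp h)
  exact lt_of_le_of_ne (hM.dotProduct_mulVec_nonneg x) (Ne.symm hne)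

lemma aux_posDef_conj {M : Matrix (Fin r) (Fin r) ℂ} (hM : M.PosDef)
    (B : Matrix (Fin r) (Fin s) ℂ) (hB : Function.Injective B.mulVec) :
    (Bᵀ * M * B.map (starRingEnd ℂ)).PosDef := by
  set C := B.map (starRingEnd ℂ)
  have hpsd : (Cᴴ * M * C).PosSemidef := hM.posSemidef.conjTranspose_mul_mul_same C
  rw [aux_transpose_eq_conjTranspose_map]
  refine Matrix.PosDef.of_dotProduct_mulVec_pos hpsd.1 fun x hx => ?_
  have hCx : C *ᵥ x ≠ 0 := by
    have : C *ᵥ x = star (B *ᵥ star x) := by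
      simpa using aux_map_star_mulVec B (star x)
    rw [this, star_ne_zero]
    intro h
    exact hx <| by simpa using congrArg star (hB (by simpa using h) : star x = 0)
  simpa only [Matrix.star_mulVec, Matrix.dotProduct_mulVec, Matrix.vecMul_vecMul] using
    hM.dotProduct_mulVec_pos hCx

end AuxRestriction

/-- Local form of Lemma 2.3.4(1) / 2.4.3(1): the restriction of a negatively curved singular
Hermitian metric `h` of rank `r` to a holomorphic rank-`s` subbundle, given by a holomorphic
everywhere-injective matrix `B : Ω → M_{r×s}(ℂ)`, is a negatively curved singular Hermitian
metric `h_S` of rank `s`, characterized by `|v|²_{h_S}(x) = |B(x)v(x)|²_h(x)`. -/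
theorem restriction_to_subbundle_negCurved {n r s : ℕ} (hs1 : 1 ≤ s) (hsr : s ≤ r)
    (Ω : Set (Fin n → ℂ)) (hΩ : IsOpen Ω)
    (h : (Fin n → ℂ) → Matrix (Fin r) (Fin r) ℂ)
    (hmet : IsSingMetricOn h Ω) (hneg : NegCurved h Ω)
    (B : (Fin n → ℂ) → Matrix (Fin r) (Fin s) ℂ)
    (hB : ∀ i j, DifferentiableOn ℂ (fun x => B x i j) Ω)
    (hBinj : ∀ x ∈ Ω, Function.Injective (B x).mulVec) :
    ∃ hS : (Fin n → ℂ) → Matrix (Fin s) (Fin s) ℂ,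
      (∀ x ∈ Ω, ∀ w : Fin s → ℂ,
        hermNormSq hS (fun _ => w) x = hermNormSq h (fun _ => (B x).mulVec w) x) ∧
      IsSingMetricOn hS Ω ∧ NegCurved hS Ω := by
  classical
  set hS : (Fin n → ℂ) → Matrix (Fin s) (Fin s) ℂ :=
    fun x => (B x)ᵀ * h x * (B x).map (starRingEnd ℂ) with hSdef
  have hchar : ∀ x, ∀ w : Fin s → ℂ,
      hermNormSq hS (fun _ => w) x = hermNormSq h (fun _ => (B x).mulVec w) x := fun x w =>
    congrArg Complex.re (aux_key (h x) (B x) w)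
  have hBm : ∀ i j, Measurable fun x : Ω => B x.1 i j := fun i j =>
    ((hB i j).continuousOn).restrict.measurable
  refine ⟨hS, fun x _ w => hchar x w, ⟨?_, ?_, ?_⟩, ?_⟩
  · -- measurability
    intro i j
    have : (fun x : Ω => hS x.1 i j) =
        fun x : Ω => ∑ l, (∑ k, B x.1 k i * h x.1 k l) * (starRingEnd ℂ) (B x.1 l j) := by
      funext x
      simp [hSdef, Matrix.mul_apply, Matrix.map_apply, Matrix.transpose_apply]
    rw [this]
    refine Finset.measurable_sum _ fun l _ => Measurable.mul ?_ ?_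
    · exact Finset.measurable_sum _ fun k _ => (hBm k i).mul (hmet.1 k l)
    · exact Complex.continuous_conj.measurable.comp (hBm l j)
  · -- pointwise PosSemidef
    intro x hx
    have : hS x = ((B x).map (starRingEnd ℂ))ᴴ * h x * (B x).map (starRingEnd ℂ) := by
      show (B x)ᵀ * h x * _ = _
      rw [aux_transpose_eq_conjTranspose_map]
    rw [this]
    exact (hmet.2.1 x hx).conjTranspose_mul_mul_same _
  · -- a.e. positive determinant
    filter_upwards [hmet.2.2, ae_restrict_mem hΩ.measurableSet] with x hdet hxΩ
    have hpd : (h x).PosDef :=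
      aux_posDef_of_posSemidef_det (hmet.2.1 x hxΩ) hdet
    have hSpd : (hS x).PosDef := aux_posDef_conj hpd (B x) (hBinj x hxΩ)
    have := hSpd.det_pos
    rw [Complex.lt_def] at this
    simpa using this.1
  · -- negative curvature
    intro U hU hUΩ v hv hvne
    have hu : DifferentiableOn ℂ (fun x => (B x).mulVec (v x)) U := by
      rw [differentiableOn_pi]
      intro i
      have : (fun x => (B x).mulVec (v x) i) =
          fun x => ∑ k, B x i k * v x k := by
        funext x; simp [Matrix.mulVec, dotProduct]
      rw [this]
      exact DifferentiableOn.fun_sum fun k _ =>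
        ((hB i k).mono hUΩ).mul ((differentiableOn_pi.mp hv) k)
    have heq : (fun x => elog (hermNormSq hS v x)) =
        fun x => elog (hermNormSq h (fun y => (B y).mulVec (v y)) x) := by
      funext x
      congr 1
      exact congrArg Complex.re (aux_key (h x) (B x) (v x))
    rw [heq]
    refine hneg U hU hUΩ _ hu fun x hx => ?_
    obtain ⟨y, hy, hvy⟩ := hvne x hx
    refine ⟨y, hy, fun h0 => hvy ?_⟩
    have hyΩ : y ∈ Ω := hUΩ (connectedComponentIn_subset U x hy)
    exact hBinj y hyΩ (show (B y).mulVec (v y) = (B y).mulVec 0 by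
      simpa [Matrix.mulVec_zero] using h0)
end
end
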